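/- Let u : ℂ → ℝ be continuous and suppose the finite limit c := lim_{|t|→∞}(u(t) − log|t|) exists. Define U : ℂ² → [−∞,∞) by U(z,w) := log|z| + u(w/z) for z ≠ 0, U(0,w) := log|w| + c for w ≠ 0, and U(0,0) := −∞. Let ε > 0, let n be a positive integer, and let p(t) = a_0 + a_1 t + ⋯ + a_n t^n and q(t) = b_0 + b_1 t + ⋯ + b_n t^n be polynomials of degree at most n satisfying u(t) − ε ≤ max((1/n)·log|p(t)|, (1/n)·log|q(t)|) ≤ u(t) for all t ∈ ℂ. Define the homogenizations P(z,w) := Σ_{j=0}^{n} a_j z^{n−j} w^j and Q(z,w) := Σ_{j=0}^{n} b_j z^{n−j} w^j. Then U(z,w) − ε ≤ max((1/n)·log|P(z,w)|, (1/n)·log|Q(z,w)|) ≤ U(z,w) for all (z,w) ∈ ℂ² (inequalities in [−∞,∞)). -/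

import Mathlib

open MeasureTheory Filter Topology

noncomputable section

/-- `log |x|`, with value `-∞` at `x = 0`. -/
def elog (x : ℂ) : EReal :=
  if x = 0 then ⊥ else ((Real.log (‖x‖) : ℝ) : EReal)

lemma elog_zero' : elog 0 = ⊥ := if_pos rfl

lemma elog_of_ne {x : ℂ} (hx : x ≠ 0) :
    elog x = ((Real.log (‖x‖) : ℝ) : EReal) := if_neg hx

lemma elog_ne_top (x : ℂ) : elog x ≠ ⊤ := by
  unfold elog; split <;> simp

lemma max_elog_eq {x y : ℂ} (h : x ≠ 0 ∨ y ≠ 0) :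
    max (elog x) (elog y)
      = ((Real.log (max (‖x‖) (‖y‖)) : ℝ) : EReal) := by
  rcases eq_or_ne x 0 with hx | hx
  · rcases h with h | hy
    · exact absurd hx h
    · rw [hx, elog_zero', elog_of_ne hy, max_eq_right bot_le]
      congr 1
      rw [show ‖(0:ℂ)‖ = 0 by simp, max_eq_right (norm_nonneg y)]
  · rcases eq_or_ne y 0 with hy | hy
    · rw [hy, elog_zero', elog_of_ne hx, max_eq_left bot_le]
      congr 1
      rw [show ‖(0:ℂ)‖ = 0 by simp, max_eq_left (norm_nonneg x)]
    · rw [elog_of_ne hx, elog_of_ne hy]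
      rcases le_total (‖x‖) (‖y‖) with hle | hle
      · rw [max_eq_right hle, max_eq_right]
        exact EReal.coe_le_coe_iff.mpr
          (Real.log_le_log ((norm_pos_iff.mpr hx)) hle)
      · rw [max_eq_left hle, max_eq_left]
        exact EReal.coe_le_coe_iff.mpr
          (Real.log_le_log ((norm_pos_iff.mpr hy)) hle)

lemma elog_pow_mul {z : ℂ} (hz : z ≠ 0) (n : ℕ) (x : ℂ) :
    elog (z ^ n * x)
      = (((n : ℝ) * Real.log (‖z‖) : ℝ) : EReal) + elog x := by
  rcases eq_or_ne x 0 with hx | hx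
  · rw [hx, mul_zero, elog_zero', EReal.add_bot]
  · have hzx : z ^ n * x ≠ 0 := mul_ne_zero (pow_ne_zero n hz) hx
    rw [elog_of_ne hzx, elog_of_ne hx, ← EReal.coe_add]
    congr 1
    rw [norm_mul, norm_pow,
      Real.log_mul (pow_ne_zero n ((norm_ne_zero_iff.mpr hz))) ((norm_ne_zero_iff.mpr hx)),
      Real.log_pow]

theorem statement5 (u : ℂ → ℝ) (hu : Continuous u) (c : ℝ)
    (hc : Tendsto (fun t => u t - Real.log (‖t‖))
      (Filter.comap (fun t : ℂ => ‖t‖) Filter.atTop) (𝓝 c))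
    (U : ℂ × ℂ → EReal)
    (hU₁ : ∀ z w : ℂ, z ≠ 0 →
      U (z, w) = ((Real.log (‖z‖) + u (w / z) : ℝ) : EReal))
    (hU₂ : ∀ w : ℂ, w ≠ 0 →
      U (0, w) = ((Real.log (‖w‖) + c : ℝ) : EReal))
    (hU₃ : U (0, 0) = ⊥)
    (ε : ℝ) (hε : 0 < ε) (n : ℕ) (hn : 0 < n)
    (p q : Polynomial ℂ) (hp : p.natDegree ≤ n) (hq : q.natDegree ≤ n)
    (hpq : ∀ t : ℂ,
      ((u t - ε : ℝ) : EReal) ≤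
        ((n : ℝ)⁻¹ : EReal) * max (elog (p.eval t)) (elog (q.eval t)) ∧
      ((n : ℝ)⁻¹ : EReal) * max (elog (p.eval t)) (elog (q.eval t)) ≤
        ((u t : ℝ) : EReal))
    (P Q : ℂ → ℂ → ℂ)
    (hP : ∀ z w : ℂ, P z w = ∑ j ∈ Finset.range (n + 1), p.coeff j * z ^ (n - j) * w ^ j)
    (hQ : ∀ z w : ℂ, Q z w = ∑ j ∈ Finset.range (n + 1), q.coeff j * z ^ (n - j) * w ^ j) :
    ∀ z w : ℂ,
      U (z, w) - (ε : EReal) ≤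
        ((n : ℝ)⁻¹ : EReal) * max (elog (P z w)) (elog (Q z w)) ∧
      ((n : ℝ)⁻¹ : EReal) * max (elog (P z w)) (elog (Q z w)) ≤ U (z, w) := by
  simp only [← EReal.coe_inv] at hpq ⊢
  have hnR : (0 : ℝ) < (n : ℝ) := Nat.cast_pos.mpr hn
  have hinv : (0 : ℝ) < (n : ℝ)⁻¹ := inv_pos.mpr hnR
  have hinvE : (0 : EReal) < (((n : ℝ)⁻¹ : ℝ) : EReal) := EReal.coe_pos.mpr hinv
  -- scaling lemma
  have hscale : ∀ (r : ℝ) (X : EReal), X ≠ ⊤ →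
      (((n : ℝ)⁻¹ : ℝ) : EReal) * ((((n : ℝ) * r : ℝ) : EReal) + X)
        = (r : EReal) + (((n : ℝ)⁻¹ : ℝ) : EReal) * X := by
    intro r X hX
    induction X with
    | bot =>
        rw [EReal.add_bot, EReal.mul_bot_of_pos hinvE, EReal.add_bot]
    | coe x =>
        rw [← EReal.coe_add, ← EReal.coe_mul, ← EReal.coe_mul, ← EReal.coe_add]
        congr 1
        field_simp
    | top => exact absurd rfl hX
  -- each `t`, not both p(t), q(t) vanish
  have Hne : ∀ t : ℂ, p.eval t ≠ 0 ∨ q.eval t ≠ 0 := by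
    intro t
    by_contra h
    push_neg at h
    have h1 := (hpq t).1
    rw [h.1, h.2, elog_zero', max_self, EReal.mul_bot_of_pos hinvE] at h1
    exact EReal.coe_ne_bot _ (le_bot_iff.mp h1)
  -- real-valued pointwise inequalities
  set m : ℂ → ℝ := fun t =>
    Real.log (max (‖p.eval t‖) (‖q.eval t‖)) with hm
  have Hmax : ∀ t : ℂ,
      max (elog (p.eval t)) (elog (q.eval t)) = ((m t : ℝ) : EReal) :=
    fun t => max_elog_eq (Hne t)
  have Hreal : ∀ t : ℂ, u t - ε ≤ (n : ℝ)⁻¹ * m t ∧ (n : ℝ)⁻¹ * m t ≤ u t := by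
    intro t
    have h1 := (hpq t).1
    have h2 := (hpq t).2
    rw [Hmax t, ← EReal.coe_mul] at h1 h2
    exact ⟨EReal.coe_le_coe_iff.mp h1, EReal.coe_le_coe_iff.mp h2⟩
  -- the filter
  set L : Filter ℂ := Filter.comap (fun t : ℂ => ‖t‖) Filter.atTop with hL
  have hLne : L.NeBot := by
    apply Filter.comap_neBot
    intro s hs
    rcases mem_atTop_sets.mp hs with ⟨a, ha⟩
    exact ⟨(max a 0 : ℝ), by
      have : ‖((max a 0 : ℝ) : ℂ)‖ = max a 0 := by
        rw [Complex.norm_real, Real.norm_eq_abs, abs_of_nonneg (le_max_right a 0)]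
      rw [this]; exact ha _ (le_max_left a 0)⟩
  have habs_top : Tendsto (fun t : ℂ => ‖t‖) L atTop := tendsto_comap
  have hne0 : ∀ᶠ t in L, t ≠ 0 := by
    filter_upwards [habs_top.eventually_ge_atTop 1] with t ht
    intro h
    rw [h] at ht; simp at ht; linarith
  -- limit of r.eval t / t^n
  have hdiv : ∀ r : Polynomial ℂ, r.natDegree ≤ n →
      Tendsto (fun t : ℂ => r.eval t / t ^ n) L (𝓝 (r.coeff n)) := by
    intro r hr
    have hinvt : Tendsto (fun t : ℂ => t⁻¹) L (𝓝 0) := by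
      rw [tendsto_zero_iff_norm_tendsto_zero]
      simp only [norm_inv]
      exact tendsto_inv_atTop_zero.comp habs_top
    have key : Tendsto (fun t : ℂ =>
        ∑ j ∈ Finset.range (n + 1), r.coeff j * (t⁻¹) ^ (n - j)) L
        (𝓝 (∑ j ∈ Finset.range (n + 1), if j = n then r.coeff n else 0)) := by
      apply tendsto_finset_sum
      intro j hj
      rcases eq_or_ne j n with hjn | hjn
      · subst hjn
        simp only [Nat.sub_self, pow_zero, mul_one, if_true]
        exact tendsto_const_nhds
      · have hjlt : j < n := lt_of_le_of_ne (Finset.mem_range_succ_iff.mp hj) hjn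
        simp only [if_neg hjn]
        have : Tendsto (fun t : ℂ => (t⁻¹) ^ (n - j)) L (𝓝 0) := by
          have := hinvt.pow (n - j)
          rwa [zero_pow (by omega : n - j ≠ 0)] at this
        simpa using this.const_mul (r.coeff j)
    have hsum : (∑ j ∈ Finset.range (n + 1), if j = n then r.coeff n else 0)
        = r.coeff n := by
      rw [Finset.sum_ite_eq' (Finset.range (n + 1)) n fun _ => r.coeff n]
      simp
    rw [hsum] at key
    apply key.congr'
    filter_upwards [hne0] with t ht
    rw [Polynomial.eval_eq_sum_range' (Nat.lt_succ_of_le hr), Finset.sum_div]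
    apply Finset.sum_congr rfl
    intro j hj
    have hjle : j ≤ n := Finset.mem_range_succ_iff.mp hj
    rw [mul_div_assoc]
    congr 1
    rw [inv_pow, pow_sub₀ t ht hjle, mul_inv, inv_inv, div_eq_mul_inv, mul_comm]
  have habs : ∀ r : Polynomial ℂ, r.natDegree ≤ n →
      Tendsto (fun t : ℂ => ‖r.eval t‖ / ‖t‖ ^ n) L
        (𝓝 (‖r.coeff n‖)) := by
    intro r hr
    have := (continuous_norm.tendsto _).comp (hdiv r hr)
    apply this.congr
    intro t
    simp [map_div₀, map_pow]
  set M : ℝ := max (‖p.coeff n‖) (‖q.coeff n‖) with hMdef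
  have hmaxpos : ∀ t : ℂ, 0 < max (‖p.eval t‖) (‖q.eval t‖) := by
    intro t
    rcases Hne t with h | h
    · exact lt_max_of_lt_left ((norm_pos_iff.mpr h))
    · exact lt_max_of_lt_right ((norm_pos_iff.mpr h))
  have hmaxlim : Tendsto (fun t : ℂ =>
      max (‖p.eval t‖) (‖q.eval t‖) / ‖t‖ ^ n) L (𝓝 M) := by
    apply ((habs p hp).max (habs q hq)).congr'
    filter_upwards [hne0] with t ht
    rw [max_div_div_right (le_of_lt (pow_pos ((norm_pos_iff.mpr ht)) n))]
  -- eventual identity: (1/n) log(maxratio) = (1/n) m t - log |t|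
  have hevid : ∀ᶠ t in L,
      (n : ℝ)⁻¹ * Real.log (max (‖p.eval t‖) (‖q.eval t‖)
        / ‖t‖ ^ n)
      = ((n : ℝ)⁻¹ * m t - Real.log (‖t‖)) := by
    filter_upwards [hne0] with t ht
    rw [Real.log_div (ne_of_gt (hmaxpos t)) (pow_ne_zero n ((norm_ne_zero_iff.mpr ht))),
      Real.log_pow, mul_sub, hm]
    congr 1
    rw [← mul_assoc, inv_mul_cancel₀ (ne_of_gt hnR), one_mul]
  have hlow_bnd : ∀ᶠ t in L,
      (u t - Real.log (‖t‖)) - ε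
        ≤ (n : ℝ)⁻¹ * Real.log (max (‖p.eval t‖) (‖q.eval t‖)
            / ‖t‖ ^ n) := by
    filter_upwards [hevid] with t ht
    rw [ht]
    have := (Hreal t).1
    linarith
  have hup_bnd : ∀ᶠ t in L,
      (n : ℝ)⁻¹ * Real.log (max (‖p.eval t‖) (‖q.eval t‖)
          / ‖t‖ ^ n)
        ≤ u t - Real.log (‖t‖) := by
    filter_upwards [hevid] with t ht
    rw [ht]
    have := (Hreal t).2
    linarith
  have hM : M ≠ 0 := by
    intro hM0
    rw [hM0] at hmaxlim
    have hratpos : ∀ᶠ t in L, (0 : ℝ) < max (‖p.eval t‖) (‖q.eval t‖)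
        / ‖t‖ ^ n := by
      filter_upwards [hne0] with t ht
      exact div_pos (hmaxpos t) (pow_pos ((norm_pos_iff.mpr ht)) n)
    have hlogbot : Tendsto (fun t : ℂ =>
        Real.log (max (‖p.eval t‖) (‖q.eval t‖)
          / ‖t‖ ^ n)) L atBot := by
      apply Real.tendsto_log_nhdsNE_zero.comp
      rw [tendsto_nhdsWithin_iff]
      exact ⟨hmaxlim, hratpos.mono fun t ht => ne_of_gt ht⟩
    have hscaled : Tendsto (fun t : ℂ =>
        (n : ℝ)⁻¹ * Real.log (max (‖p.eval t‖) (‖q.eval t‖)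
          / ‖t‖ ^ n)) L atBot := by
      have := hlogbot.atBot_mul_const hinv
      simpa [mul_comm] using this
    have hlb : ∀ᶠ t in L, c - ε - 1
        ≤ (n : ℝ)⁻¹ * Real.log (max (‖p.eval t‖) (‖q.eval t‖)
            / ‖t‖ ^ n) := by
      have h1 : ∀ᶠ t in L, c - ε - 1 < (u t - Real.log (‖t‖)) - ε := by
        apply (hc.sub_const ε).eventually
        exact eventually_gt_nhds (by linarith)
      filter_upwards [h1, hlow_bnd] with t h1 h2
      linarith
    have hub := hscaled.eventually (eventually_lt_atBot (c - ε - 1))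
    rcases (hlb.and hub).exists with ⟨t, h1, h2⟩
    linarith
  have hloglim : Tendsto (fun t : ℂ =>
      (n : ℝ)⁻¹ * Real.log (max (‖p.eval t‖) (‖q.eval t‖)
        / ‖t‖ ^ n)) L (𝓝 ((n : ℝ)⁻¹ * Real.log M)) :=
    (((Real.continuousAt_log hM).tendsto.comp hmaxlim).const_mul _)
  have hlowM : c - ε ≤ (n : ℝ)⁻¹ * Real.log M := by
    have h1 : Tendsto (fun t : ℂ => (u t - Real.log (‖t‖)) - ε) L (𝓝 (c - ε)) :=
      hc.sub_const ε
    exact le_of_tendsto_of_tendsto h1 hloglim hlow_bnd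
  have hupM : (n : ℝ)⁻¹ * Real.log M ≤ c := le_of_tendsto_of_tendsto hloglim hc hup_bnd
  have hcoeffne : p.coeff n ≠ 0 ∨ q.coeff n ≠ 0 := by
    by_contra h
    push_neg at h
    apply hM
    rw [hMdef, h.1, h.2]
    simp
  have hA : max (elog (p.coeff n)) (elog (q.coeff n)) = ((Real.log M : ℝ) : EReal) :=
    max_elog_eq hcoeffne
  -- homogenization identities
  have hPz : ∀ z w : ℂ, z ≠ 0 → P z w = z ^ n * p.eval (w / z) := by
    intro z w hz
    rw [hP, Polynomial.eval_eq_sum_range' (Nat.lt_succ_of_le hp), Finset.mul_sum]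
    apply Finset.sum_congr rfl
    intro j hj
    have hjle : j ≤ n := Finset.mem_range_succ_iff.mp hj
    have hzn : z ^ n = z ^ (n - j) * z ^ j := by
      rw [← pow_add]; congr 1; omega
    rw [div_pow, hzn]
    field_simp
  have hQz : ∀ z w : ℂ, z ≠ 0 → Q z w = z ^ n * q.eval (w / z) := by
    intro z w hz
    rw [hQ, Polynomial.eval_eq_sum_range' (Nat.lt_succ_of_le hq), Finset.mul_sum]
    apply Finset.sum_congr rfl
    intro j hj
    have hjle : j ≤ n := Finset.mem_range_succ_iff.mp hj
    have hzn : z ^ n = z ^ (n - j) * z ^ j := by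
      rw [← pow_add]; congr 1; omega
    rw [div_pow, hzn]
    field_simp
  have hP0 : ∀ w : ℂ, P 0 w = w ^ n * p.coeff n := by
    intro w
    rw [hP, Finset.sum_eq_single n]
    · simp [Nat.sub_self, mul_comm]
    · intro j hj hjn
      have hjlt : j < n := lt_of_le_of_ne (Finset.mem_range_succ_iff.mp hj) hjn
      rw [zero_pow (by omega : n - j ≠ 0)]
      ring
    · intro h
      exact absurd (Finset.self_mem_range_succ n) h
  have hQ0 : ∀ w : ℂ, Q 0 w = w ^ n * q.coeff n := by
    intro w
    rw [hQ, Finset.sum_eq_single n]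
    · simp [Nat.sub_self, mul_comm]
    · intro j hj hjn
      have hjlt : j < n := lt_of_le_of_ne (Finset.mem_range_succ_iff.mp hj) hjn
      rw [zero_pow (by omega : n - j ≠ 0)]
      ring
    · intro h
      exact absurd (Finset.self_mem_range_succ n) h
  -- main case analysis
  intro z w
  rcases eq_or_ne z 0 with hz | hz
  · subst hz
    rcases eq_or_ne w 0 with hw | hw
    · subst hw
      have hP00 : P 0 0 = 0 := by
        rw [hP0, zero_pow hn.ne', zero_mul]
      have hQ00 : Q 0 0 = 0 := by
        rw [hQ0, zero_pow hn.ne', zero_mul]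
      rw [hP00, hQ00, hU₃, elog_zero', max_self, EReal.mul_bot_of_pos hinvE,
        EReal.bot_sub]
      exact ⟨le_refl ⊥, le_refl ⊥⟩
    · -- z = 0, w ≠ 0
      rw [hP0 w, hQ0 w, hU₂ w hw,
        elog_pow_mul hw n (p.coeff n), elog_pow_mul hw n (q.coeff n),
        max_add_add_left, hA,
        hscale (Real.log (‖w‖)) _ (EReal.coe_ne_top _),
        ← EReal.coe_mul]
      constructor
      · rw [← EReal.coe_sub, show Real.log (‖w‖) + c - ε
          = Real.log (‖w‖) + (c - ε) by ring, EReal.coe_add]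
        exact add_le_add_right (EReal.coe_le_coe_iff.mpr hlowM) _
      · rw [EReal.coe_add]
        exact add_le_add_right (EReal.coe_le_coe_iff.mpr hupM) _
  · -- z ≠ 0
    have hXnetop : max (elog (p.eval (w / z))) (elog (q.eval (w / z))) ≠ ⊤ := by
      rw [Hmax]; exact EReal.coe_ne_top _
    rw [hPz z w hz, hQz z w hz, hU₁ z w hz,
      elog_pow_mul hz n (p.eval (w / z)), elog_pow_mul hz n (q.eval (w / z)),
      max_add_add_left,
      hscale (Real.log (‖z‖)) _ hXnetop]
    constructor
    · rw [← EReal.coe_sub, show Real.log (‖z‖) + u (w / z) - ε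
        = Real.log (‖z‖) + (u (w / z) - ε) by ring, EReal.coe_add]
      exact add_le_add_right (hpq (w / z)).1 _
    · rw [EReal.coe_add]
      exact add_le_add_right (hpq (w / z)).2 _
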